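/- Let C = (x_0, y_0, x_1, y_1) be an alternating cycle on four vertices of a graph G, and let T be an unweighted tree whose leaves include x_0, y_0, x_1, y_1. Then T can satisfy C if and only if T contains the quartet x_0 y_0 | x_1 y_1. -/

import Mathlib

open SimpleGraph

namespace LeafPaper

/-- A leaf of a graph: a vertex with exactly one neighbor. -/
def IsLeaf {W : Type} (T : SimpleGraph W) (w : W) : Prop := ∃! u, T.Adj w u

/-- The edge list of the (unique, if `T` is a tree) path between `x` and `y`. -/
noncomputable def treePathEdges {W : Type} (T : SimpleGraph W) (x y : W) :
    List (Sym2 W) := by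
  classical
  exact if h : T.Reachable x y then (Classical.choice h).bypass.edges else []

/-- The weighted distance between `x` and `y` in a tree `T` with edge weighting `f`:
the sum of the weights of the edges on the (unique) path between `x` and `y`. -/
noncomputable def wdist {W : Type} (T : SimpleGraph W) (f : Sym2 W → ℕ) (x y : W) : ℕ :=
  ((treePathEdges T x y).map f).sum

/-- `(T, f)` is a leaf root of `G` with threshold `k`, where `ι` identifies the
vertices of `G` with the leaves of `T`. -/
def IsLeafRoot {V W : Type} (G : SimpleGraph V) (T : SimpleGraph W) (ι : V → W)
    (f : Sym2 W → ℕ) (k : ℕ) : Prop :=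
  T.IsTree ∧ Function.Injective ι ∧ (∀ w : W, IsLeaf T w ↔ w ∈ Set.range ι) ∧
    (∀ e ∈ T.edgeSet, 0 < f e) ∧
    ∀ u v : V, u ≠ v → (G.Adj u v ↔ wdist T f (ι u) (ι v) ≤ k)

/-- An unweighted tree `T` is an unweighted leaf root of `G` if some positive
integer weighting of its edges makes it a leaf root of `G`. -/
def IsUnweightedLeafRoot {V W : Type} (G : SimpleGraph V) (T : SimpleGraph W)
    (ι : V → W) : Prop :=
  ∃ (f : Sym2 W → ℕ) (k : ℕ), IsLeafRoot G T ι f k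

/-- `G` is a leaf power: there are a finite tree `T` whose leaf set is exactly `V(G)`
and a positive threshold `k` such that distinct vertices are adjacent in `G` iff their
tree distance is at most `k`. -/
def IsLeafPower {V : Type} (G : SimpleGraph V) : Prop :=
  ∃ (W : Type) (T : SimpleGraph W) (ι : V → W) (k : ℕ),
    Finite W ∧ T.IsTree ∧ Function.Injective ι ∧
      (∀ w : W, IsLeaf T w ↔ w ∈ Set.range ι) ∧ 0 < k ∧
      ∀ u v : V, u ≠ v → (G.Adj u v ↔ T.dist (ι u) (ι v) ≤ k)

/-- An alternating cycle `(x 0, y 0, x 1, y 1, …)` of `G`: `2c` distinct vertices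
such that `x i y i` is an edge and `y i x (i+1)` is a non-edge (indices mod `c`). -/
def IsAltCycle {V : Type} (G : SimpleGraph V) (c : ℕ) (x y : ZMod c → V) : Prop :=
  2 ≤ c ∧ Function.Injective (Sum.elim x y) ∧
    ∀ i : ZMod c, G.Adj (x i) (y i) ∧ ¬ G.Adj (y i) (x (i + 1))

/-- The weighted tree `(T, f)` satisfies the alternating cycle given by `x, y`
with threshold `k`. -/
def Satisfies {V W : Type} (T : SimpleGraph W) (f : Sym2 W → ℕ) (ι : V → W)
    (c : ℕ) (x y : ZMod c → V) (k : ℕ) : Prop :=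
  ∀ i : ZMod c, wdist T f (ι (x i)) (ι (y i)) ≤ k ∧
    k < wdist T f (ι (y i)) (ι (x (i + 1)))

/-- The unweighted tree `T` can satisfy the alternating cycle given by `x, y`. -/
def CanSatisfy {V W : Type} (T : SimpleGraph W) (ι : V → W) (c : ℕ)
    (x y : ZMod c → V) : Prop :=
  ∃ (f : Sym2 W → ℕ) (k : ℕ), (∀ e ∈ T.edgeSet, 0 < f e) ∧ Satisfies T f ι c x y k

/-- `T` contains the quartet `ab|cd`: the four vertices are distinct leaves of `T` and
the path between `a` and `b` is vertex-disjoint from the path between `c` and `d`. -/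
def ContainsQuartet {W : Type} (T : SimpleGraph W) (a b c d : W) : Prop :=
  IsLeaf T a ∧ IsLeaf T b ∧ IsLeaf T c ∧ IsLeaf T d ∧ a ≠ b ∧ c ≠ d ∧
    ∀ (p : T.Walk a b) (p' : T.Walk c d), p.IsPath → p'.IsPath →
      ∀ w : W, w ∈ p.support → w ∉ p'.support


section Helpers
variable {W : Type} {T : SimpleGraph W}

lemma sum_map_le {α : Type*} (f : α → ℕ) {l₁ l₂ : List α} (h : List.Subperm l₁ l₂) :
    (l₁.map f).sum ≤ (l₂.map f).sum := by
  obtain ⟨l, hp, hs⟩ := h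
  have h1 : (l.map f).sum = (l₁.map f).sum := (hp.map f).sum_eq
  have h4 : (↑(l.map f) : Multiset ℕ) ≤ ↑(l₂.map f) := Multiset.coe_le.2 (hs.map f).subperm
  obtain ⟨u, hu⟩ := Multiset.le_iff_exists_add.1 h4
  have h5 := congrArg Multiset.sum hu
  simp only [Multiset.sum_add, Multiset.sum_coe] at h5
  omega

lemma treePathEdges_eq (hT : T.IsTree) {x y : W} (p : T.Walk x y) (hp : p.IsPath) :
    treePathEdges T x y = p.edges := by
  classical
  have hr : T.Reachable x y := ⟨p⟩
  unfold treePathEdges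
  rw [dif_pos hr]
  obtain ⟨q, -, hq⟩ := hT.existsUnique_path x y
  rw [hq _ (Classical.choice hr).bypass_isPath, hq _ hp]

lemma wdist_eq (hT : T.IsTree) {x y : W} (p : T.Walk x y) (hp : p.IsPath) (f : Sym2 W → ℕ) :
    wdist T f x y = (p.edges.map f).sum := by
  rw [wdist, treePathEdges_eq hT p hp]

lemma wdist_symm (hT : T.IsTree) (f : Sym2 W → ℕ) (x y : W) :
    wdist T f x y = wdist T f y x := by
  classical
  obtain ⟨p⟩ := hT.isConnected.preconnected x y
  rw [wdist_eq hT p.bypass p.bypass_isPath, wdist_eq hT p.bypass.reverse p.bypass_isPath.reverse,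
    Walk.edges_reverse, List.map_reverse, List.sum_reverse]

lemma wdist_triangle (hT : T.IsTree) (f : Sym2 W → ℕ) (x y z : W) :
    wdist T f x z ≤ wdist T f x y + wdist T f y z := by
  classical
  obtain ⟨p⟩ := hT.isConnected.preconnected x y
  obtain ⟨q⟩ := hT.isConnected.preconnected y z
  rw [wdist_eq hT p.bypass p.bypass_isPath, wdist_eq hT q.bypass q.bypass_isPath,
    wdist_eq hT (p.bypass.append q.bypass).bypass (p.bypass.append q.bypass).bypass_isPath]
  have hsub : List.Subperm (p.bypass.append q.bypass).bypass.edges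
      (p.bypass.append q.bypass).edges :=
    List.subperm_of_subset (p.bypass.append q.bypass).bypass_isPath.edges_nodup
      (Walk.edges_bypass_subset _)
  calc ((p.bypass.append q.bypass).bypass.edges.map f).sum
      ≤ ((p.bypass.append q.bypass).edges.map f).sum := sum_map_le f hsub
    _ = (p.bypass.edges.map f).sum + (q.bypass.edges.map f).sum := by
        rw [Walk.edges_append, List.map_append, List.sum_append]

lemma wdist_split (hT : T.IsTree) (f : Sym2 W → ℕ) {x y w : W} (p : T.Walk x y)
    (hp : p.IsPath) (hw : w ∈ p.support) :
    wdist T f x y = wdist T f x w + wdist T f w y := by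
  classical
  rw [wdist_eq hT p hp, wdist_eq hT (p.takeUntil w hw) (hp.takeUntil hw),
    wdist_eq hT (p.dropUntil w hw) (hp.dropUntil hw)]
  conv_lhs => rw [← p.take_spec hw]
  rw [Walk.edges_append, List.map_append, List.sum_append]

lemma exists_cross (S : Set W) {b c : W} (p : T.Walk b c) (hb : b ∈ S) (hc : c ∉ S) :
    ∃ u v, s(u, v) ∈ p.edges ∧ u ∈ S ∧ v ∉ S := by
  classical
  induction p with
  | nil => exact absurd hb hc
  | @cons b b' c h q ih =>
    by_cases hb' : b' ∈ S
    · obtain ⟨u, v, he, hu, hv⟩ := ih hb' hc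
      exact ⟨u, v, by simp [he], hu, hv⟩
    · exact ⟨b, b', by simp, hb, hb'⟩

lemma backward_weighting [Fintype W] (hT : T.IsTree) {a b c d : W}
    (pab : T.Walk a b) (pcd : T.Walk c d) (hpab : pab.IsPath) (hpcd : pcd.IsPath)
    (hdisj : ∀ w, w ∈ pab.support → w ∉ pcd.support) :
    ∃ (f : Sym2 W → ℕ) (k : ℕ), (∀ e, 0 < f e) ∧ wdist T f a b ≤ k ∧
      wdist T f c d ≤ k ∧ k < wdist T f b c ∧ k < wdist T f d a := by
  classical
  set n := Fintype.card W with hn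
  have hn0 : 0 < n := Fintype.card_pos_iff.2 ⟨a⟩
  set f : Sym2 W → ℕ := fun e => if e ∈ pab.edges ∨ e ∈ pcd.edges then 1 else n with hf
  have hfpos : ∀ e, 0 < f e := by
    intro e; rw [hf]; dsimp only; split <;> omega
  have hle : ∀ (u v : W) (p : T.Walk u v), p.IsPath →
      (∀ e ∈ p.edges, f e = 1) → wdist T f u v ≤ n - 1 := by
    intro u v p hp h1
    rw [wdist_eq hT p hp]
    have := List.sum_le_card_nsmul (p.edges.map f) 1 (by
      intro z hz
      obtain ⟨e, he, rfl⟩ := List.mem_map.1 hz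
      rw [h1 e he])
    simp only [List.length_map, smul_eq_mul, mul_one] at this
    have hlen : p.edges.length < n := by
      rw [Walk.length_edges]; exact hp.length_lt
    omega
  have hgt : ∀ (u v : W) (S : Set W) (hu : u ∈ S) (hv : v ∉ S),
      (∀ e : Sym2 W, (∃ w₁ w₂, e = s(w₁, w₂) ∧ w₁ ∈ S ∧ w₂ ∉ S) → f e = n) →
      n - 1 < wdist T f u v := by
    intro u v S hu hv hbig
    obtain ⟨p⟩ := hT.isConnected.preconnected u v
    rw [wdist_eq hT p.bypass p.bypass_isPath]
    obtain ⟨w₁, w₂, he, hw₁, hw₂⟩ := exists_cross S p.bypass hu hv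
    have hfe : f s(w₁, w₂) = n := hbig _ ⟨w₁, w₂, rfl, hw₁, hw₂⟩
    have hmem : f s(w₁, w₂) ∈ p.bypass.edges.map f := List.mem_map_of_mem (f := f) he
    have := List.single_le_sum (fun x _ => Nat.zero_le x) _ hmem
    omega
  refine ⟨f, n - 1, hfpos, ?_, ?_, ?_, ?_⟩
  · exact hle a b pab hpab (fun e he => by rw [hf]; exact if_pos (Or.inl he))
  · exact hle c d pcd hpcd (fun e he => by rw [hf]; exact if_pos (Or.inr he))
  · refine hgt b c {w | w ∈ pab.support} pab.end_mem_support
      (fun hc' => hdisj c hc' pcd.start_mem_support) ?_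
    rintro e ⟨w₁, w₂, rfl, hw₁, hw₂⟩
    rw [hf]; dsimp only
    rw [if_neg]
    rintro (h | h)
    · exact hw₂ (pab.snd_mem_support_of_mem_edges h)
    · exact hdisj w₁ hw₁ (pcd.fst_mem_support_of_mem_edges h)
  · refine hgt d a {w | w ∈ pcd.support} pcd.end_mem_support
      (fun ha' => hdisj a pab.start_mem_support ha') ?_
    rintro e ⟨w₁, w₂, rfl, hw₁, hw₂⟩
    rw [hf]; dsimp only
    rw [if_neg]
    rintro (h | h)
    · exact hdisj w₁ (pab.fst_mem_support_of_mem_edges h) hw₁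
    · exact hw₂ (pcd.snd_mem_support_of_mem_edges h)

end Helpers

/-- an unweighted tree `T` whose leaves include the four vertices of a
`4`-alternating cycle `C = (x 0, y 0, x 1, y 1)` of `G` can satisfy `C` iff `T`
contains the quartet `x 0 y 0 | x 1 y 1`. -/
theorem stmt_6 {V W : Type} [Fintype V] [Fintype W] (G : SimpleGraph V)
    (T : SimpleGraph W) (hT : T.IsTree) (ι : V → W) (hι : Function.Injective ι)
    (x y : ZMod 2 → V) (hC : IsAltCycle G 2 x y)
    (hleaf : ∀ i : ZMod 2, IsLeaf T (ι (x i)) ∧ IsLeaf T (ι (y i))) :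
    CanSatisfy T ι 2 x y ↔
      ContainsQuartet T (ι (x 0)) (ι (y 0)) (ι (x 1)) (ι (y 1)) := by
  classical
  constructor
  · rintro ⟨f, k, hfpos, hsat⟩
    obtain ⟨-, hinj, -⟩ := hC
    have hxy0 : x 0 ≠ y 0 := by
      intro h
      have := hinj (a₁ := Sum.inl 0) (a₂ := Sum.inr 0) (by simpa using h)
      simp at this
    have hxy1 : x 1 ≠ y 1 := by
      intro h
      have := hinj (a₁ := Sum.inl 1) (a₂ := Sum.inr 1) (by simpa using h)
      simp at this
    refine ⟨(hleaf 0).1, (hleaf 0).2, (hleaf 1).1, (hleaf 1).2,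
      fun h => hxy0 (hι h), fun h => hxy1 (hι h), ?_⟩
    intro p p' hp hp' w hw hw'
    exfalso
    have e1 := (hsat 0).1
    have e2 := (hsat 0).2
    have e3 := (hsat 1).1
    have e4 := (hsat 1).2
    rw [show ((0 : ZMod 2) + 1) = 1 by decide] at e2
    rw [show ((1 : ZMod 2) + 1) = 0 by decide] at e4
    have s1 := wdist_split hT f p hp hw
    have s2 := wdist_split hT f p' hp' hw'
    have t1 := wdist_triangle hT f (ι (y 0)) w (ι (x 1))
    have t2 := wdist_triangle hT f (ι (y 1)) w (ι (x 0))
    have m1 := wdist_symm hT f (ι (y 0)) w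
    have m2 := wdist_symm hT f w (ι (x 1))
    have m3 := wdist_symm hT f (ι (y 1)) w
    have m4 := wdist_symm hT f w (ι (x 0))
    linarith
  · rintro ⟨-, -, -, -, -, -, hdisj⟩
    obtain ⟨pab0⟩ := hT.isConnected.preconnected (ι (x 0)) (ι (y 0))
    obtain ⟨pcd0⟩ := hT.isConnected.preconnected (ι (x 1)) (ι (y 1))
    obtain ⟨f, k, hfpos, h1, h2, h3, h4⟩ := backward_weighting hT pab0.bypass pcd0.bypass
      pab0.bypass_isPath pcd0.bypass_isPath
      (fun w hw => hdisj pab0.bypass pcd0.bypass pab0.bypass_isPath pcd0.bypass_isPath w hw)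
    refine ⟨f, k, fun e _ => hfpos e, ?_⟩
    intro i
    rcases (by decide : ∀ j : ZMod 2, j = 0 ∨ j = 1) i with rfl | rfl
    · exact ⟨h1, by rw [show ((0 : ZMod 2) + 1) = 1 by decide]; exact h3⟩
    · exact ⟨h2, by rw [show ((1 : ZMod 2) + 1) = 0 by decide]; exact h4⟩


end LeafPaper
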